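/- If f is a closed relation on a compact Hausdorff space X and U is a closed subset of X that is eventually confining for f (there exists N with fⁿ(U) ⊆ U for all n ≥ N), then the strict omega limit set equals the omega limit set: ω̂(U;f) = ω(U;f). -/

import Mathlib

open Set

/-- The image of a set `S` under a relation `f ⊆ X × X`. -/
def RelImage {X : Type*} (f : Set (X × X)) (S : Set X) : Set X :=
  {y | ∃ x ∈ S, (x, y) ∈ f}

/-- The strict omega limit set of `S` under the relation `f`. -/
def strictOmegaRel {X : Type*} [TopologicalSpace X] (f : Set (X × X)) (S : Set X) : Set X :=
  ⋂ m : ℕ, closure (⋃ n ∈ Ici m, (RelImage f)^[n] S)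

/-- The collection `𝔎(S;f)` of closed confining sets containing some forward image of `S`. -/
def KSetRel {X : Type*} [TopologicalSpace X] (f : Set (X × X)) (S : Set X) : Set (Set X) :=
  {K | IsClosed K ∧ RelImage f K ⊆ K ∧ ∃ n : ℕ, (RelImage f)^[n] S ⊆ K}

/-- The omega limit set of `S` under the relation `f`. -/
def omegaRel {X : Type*} [TopologicalSpace X] (f : Set (X × X)) (S : Set X) : Set X :=
  ⋂₀ KSetRel f S

section Aux

variable {X : Type*}

theorem relImage_mono (f : Set (X × X)) {S T : Set X} (h : S ⊆ T) :
    RelImage f S ⊆ RelImage f T := by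
  rintro y ⟨x, hx, hxy⟩
  exact ⟨x, h hx, hxy⟩

theorem relImage_iter_mono (f : Set (X × X)) (j : ℕ) {S T : Set X} (h : S ⊆ T) :
    (RelImage f)^[j] S ⊆ (RelImage f)^[j] T := by
  induction j generalizing S T with
  | zero => exact h
  | succ j ih =>
      rw [Function.iterate_succ_apply, Function.iterate_succ_apply]
      exact ih (relImage_mono f h)

variable [TopologicalSpace X] [CompactSpace X] [T2Space X]

theorem relImage_isClosed {f : Set (X × X)} (hf : IsClosed f) {C : Set X} (hC : IsClosed C) :
    IsClosed (RelImage f C) := by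
  have heq : RelImage f C = Prod.snd '' (f ∩ C ×ˢ (univ : Set X)) := by
    ext y
    constructor
    · rintro ⟨x, hx, hxy⟩
      exact ⟨(x, y), ⟨hxy, hx, trivial⟩, rfl⟩
    · rintro ⟨⟨x, y'⟩, ⟨hm, hx, -⟩, rfl⟩
      exact ⟨x, hx, hm⟩
  rw [heq]
  exact (((hf.inter (hC.prod isClosed_univ)).isCompact).image continuous_snd).isClosed

theorem relImage_iter_isClosed {f : Set (X × X)} (hf : IsClosed f) (j : ℕ)
    {C : Set X} (hC : IsClosed C) : IsClosed ((RelImage f)^[j] C) := by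
  induction j with
  | zero => exact hC
  | succ j ih =>
      rw [Function.iterate_succ_apply']
      exact relImage_isClosed hf ih

/-- Cantor-intersection style lemma for relation images. -/
theorem iInter_relImage_subset {f : Set (X × X)} (hf : IsClosed f) {C : ℕ → Set X}
    (hdec : ∀ m, C (m + 1) ⊆ C m) (hcl : ∀ m, IsClosed (C m)) :
    (⋂ m, RelImage f (C m)) ⊆ RelImage f (⋂ m, C m) := by
  intro y hy
  set D : ℕ → Set X := fun m => C m ∩ {x | (x, y) ∈ f} with hD
  have hDcl : ∀ m, IsClosed (D m) := fun m =>
    (hcl m).inter (hf.preimage (continuous_id.prodMk continuous_const))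
  have hDdec : ∀ m, D (m + 1) ⊆ D m := fun m => inter_subset_inter_left _ (hdec m)
  have hDne : ∀ m, (D m).Nonempty := by
    intro m
    obtain ⟨x, hx, hxy⟩ := mem_iInter.mp hy m
    exact ⟨x, hx, hxy⟩
  obtain ⟨x, hx⟩ := IsCompact.nonempty_iInter_of_sequence_nonempty_isCompact_isClosed D
    hDdec hDne (hDcl 0).isCompact hDcl
  refine ⟨x, ?_, (mem_iInter.mp hx 0).2⟩
  exact mem_iInter.mpr fun m => (mem_iInter.mp hx m).1

theorem iInter_relImage_iter_subset {f : Set (X × X)} (hf : IsClosed f) (j : ℕ) {C : ℕ → Set X}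
    (hdec : ∀ m, C (m + 1) ⊆ C m) (hcl : ∀ m, IsClosed (C m)) :
    (⋂ m, (RelImage f)^[j] (C m)) ⊆ (RelImage f)^[j] (⋂ m, C m) := by
  induction j generalizing C with
  | zero => simp
  | succ j ih =>
      have h1 : (⋂ m, (RelImage f)^[j + 1] (C m)) = ⋂ m, RelImage f ((RelImage f)^[j] (C m)) := by
        simp [Function.iterate_succ_apply']
      rw [h1, Function.iterate_succ_apply']
      have hdec' : ∀ m, (RelImage f)^[j] (C (m + 1)) ⊆ (RelImage f)^[j] (C m) :=
        fun m => relImage_iter_mono f j (hdec m)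
      have hcl' : ∀ m, IsClosed ((RelImage f)^[j] (C m)) :=
        fun m => relImage_iter_isClosed hf j (hcl m)
      refine (iInter_relImage_subset hf hdec' hcl').trans ?_
      exact relImage_mono f (ih hdec hcl)

end Aux

theorem stmt8 {X : Type*} [TopologicalSpace X] [CompactSpace X] [T2Space X]
    (f : Set (X × X)) (hf : IsClosed f) (U : Set X) (hU : IsClosed U)
    (N : ℕ) (hN : ∀ n, N ≤ n → (RelImage f)^[n] U ⊆ U) :
    strictOmegaRel f U = omegaRel f U := by
  set F := RelImage f with hF
  set B : ℕ → Set X := fun m => ⋃ n ∈ Ici m, F^[n] U with hB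
  set C : ℕ → Set X := fun m => closure (B m) with hC
  have hFnB : ∀ n m, m ≤ n → F^[n] U ⊆ B m := by
    intro n m hmn
    exact subset_biUnion_of_mem (u := fun n => F^[n] U) hmn
  -- B (m+1) = F (B m)
  have hBsucc : ∀ m, B (m + 1) = F (B m) := by
    intro m
    apply Subset.antisymm
    · rintro y hy
      simp only [hB, mem_iUnion, mem_Ici] at hy
      obtain ⟨n, hn, hy⟩ := hy
      obtain ⟨k, rfl⟩ : ∃ k, n = k + 1 := ⟨n - 1, (Nat.succ_pred_eq_of_pos (by omega)).symm⟩
      rw [Function.iterate_succ_apply'] at hy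
      obtain ⟨x, hx, hxy⟩ := hy
      exact ⟨x, mem_biUnion (mem_Ici.mpr (by omega) : k ∈ Ici m) hx, hxy⟩
    · rintro y ⟨x, hx, hxy⟩
      simp only [hB, mem_iUnion, mem_Ici] at hx
      obtain ⟨n, hn, hx⟩ := hx
      refine mem_biUnion (mem_Ici.mpr (by omega) : n + 1 ∈ Ici (m + 1)) ?_
      rw [Function.iterate_succ_apply']
      exact ⟨x, hx, hxy⟩
  have hBantitone : ∀ m, B (m + 1) ⊆ B m := by
    intro m y hy
    simp only [hB, mem_iUnion, mem_Ici] at hy ⊢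
    obtain ⟨n, hn, hy⟩ := hy
    exact ⟨n, by omega, hy⟩
  have hBle : ∀ a b, a ≤ b → B b ⊆ B a := by
    intro a b hab y hy
    simp only [hB, mem_iUnion, mem_Ici] at hy ⊢
    obtain ⟨n, hn, hy⟩ := hy
    exact ⟨n, by omega, hy⟩
  have hCcl : ∀ m, IsClosed (C m) := fun m => isClosed_closure
  have hCantitone : Antitone C := by
    apply antitone_nat_of_succ_le
    intro m
    exact closure_mono (hBantitone m)
  -- C (m+1) ⊆ F (C m)
  have hCsucc : ∀ m, C (m + 1) ⊆ F (C m) := by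
    intro m
    apply closure_minimal
    · rw [hBsucc m]
      exact relImage_mono f subset_closure
    · exact relImage_isClosed hf isClosed_closure
  -- C (m+j) ⊆ F^[j] (C m)
  have hCiter : ∀ j m, C (m + j) ⊆ F^[j] (C m) := by
    intro j
    induction j with
    | zero => intro m; simp
    | succ j ih =>
        intro m
        have : C (m + (j + 1)) = C ((m + j) + 1) := by ring_nf
        rw [this, Function.iterate_succ_apply']
        exact (hCsucc (m + j)).trans (relImage_mono f (ih m))
  have hBNU : B N ⊆ U := by
    intro x hx
    simp only [hB, mem_iUnion, mem_Ici] at hx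
    obtain ⟨n, hn, hx⟩ := hx
    exact hN n hn hx
  have hCNU : C N ⊆ U := closure_minimal hBNU hU
  have hOmegaDef : strictOmegaRel f U = ⋂ m, C m := rfl
  -- strict omega set is contained in every B p
  have hOmegaB : ∀ p, strictOmegaRel f U ⊆ B p := by
    intro p
    intro x hx
    have hx1 : x ∈ C (N + p) := by
      rw [hOmegaDef] at hx
      exact mem_iInter.mp hx (N + p)
    have : x ∈ F^[p] (C N) := hCiter p N hx1
    have : x ∈ F^[p] U := relImage_iter_mono f p hCNU this
    exact hFnB p p le_rfl this
  -- invariance of strict omega set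
  have hInv : F (strictOmegaRel f U) ⊆ strictOmegaRel f U := by
    intro y hy
    rw [hOmegaDef]
    refine mem_iInter.mpr fun m => ?_
    have : y ∈ F (B m) := relImage_mono f (hOmegaB m) hy
    rw [← hBsucc m] at this
    exact subset_closure (hBantitone m this)
  have hInvIter : ∀ j, F^[j] (strictOmegaRel f U) ⊆ strictOmegaRel f U := by
    intro j
    induction j with
    | zero => simp
    | succ j ih =>
        rw [Function.iterate_succ_apply']
        exact (relImage_mono f ih).trans hInv
  apply Subset.antisymm
  · -- strictOmega ⊆ omega
    intro x hx
    refine mem_sInter.mpr fun K hK => ?_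
    obtain ⟨hKcl, hKconf, n0, hn0⟩ := hK
    have hforward : ∀ n, n0 ≤ n → F^[n] U ⊆ K := by
      intro n hn
      induction n, hn using Nat.le_induction with
      | base => exact hn0
      | succ n hn ih =>
          rw [Function.iterate_succ_apply']
          exact (relImage_mono f ih).trans hKconf
    have hBK : B n0 ⊆ K := by
      intro z hz
      simp only [hB, mem_iUnion, mem_Ici] at hz
      obtain ⟨n, hn, hz⟩ := hz
      exact hforward n hn hz
    have hCK : C n0 ⊆ K := closure_minimal hBK hKcl
    rw [hOmegaDef] at hx
    exact hCK (mem_iInter.mp hx n0)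
  · -- omega ⊆ strictOmega
    intro x hx
    rw [hOmegaDef]
    refine mem_iInter.mpr fun p => ?_
    -- the auxiliary confining sets K_M
    have hKM : ∀ M, N ≤ M → 1 ≤ M → (⋃ j ∈ Finset.range M, F^[j] (C M)) ∈ KSetRel f U := by
      intro M hNM h1M
      have hCMU : C M ⊆ U := (hCantitone hNM).trans hCNU
      refine ⟨?_, ?_, M, ?_⟩
      · exact isClosed_biUnion_finset fun j _ => relImage_iter_isClosed hf j (hCcl M)
      · rintro y ⟨x', hx', hxy⟩
        simp only [mem_iUnion] at hx' ⊢
        obtain ⟨j, hj, hx'⟩ := hx'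
        simp only [Finset.mem_range] at hj
        have hy' : y ∈ F^[j + 1] (C M) := by
          rw [Function.iterate_succ_apply']
          exact ⟨x', hx', hxy⟩
        by_cases hjM : j + 1 < M
        · exact ⟨j + 1, by simpa using hjM, hy'⟩
        · have hjeq : j + 1 = M := by omega
          refine ⟨0, Finset.mem_range.mpr h1M, ?_⟩
          have h2 : y ∈ F^[M] U := relImage_iter_mono f M (by rw [← hjeq] at hCMU ⊢; exact hCMU) (hjeq ▸ hy')
          simp only [Function.iterate_zero_apply]
          exact subset_closure (hFnB M M le_rfl h2)
      · intro z hz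
        simp only [mem_iUnion]
        exact ⟨0, Finset.mem_range.mpr h1M, by
          simp only [Function.iterate_zero_apply]
          exact subset_closure (hFnB M M le_rfl hz)⟩
    by_contra hxp
    by_cases hcase : ∃ j, j < p ∧ ∀ m, x ∈ F^[j] (C m)
    · obtain ⟨j, hjp, hjm⟩ := hcase
      have h1 : x ∈ ⋂ m, F^[j] (C m) := mem_iInter.mpr hjm
      have h2 : x ∈ F^[j] (⋂ m, C m) :=
        iInter_relImage_iter_subset hf j (fun m => hCantitone (Nat.le_succ m)) hCcl h1
      have h3 : x ∈ strictOmegaRel f U := hInvIter j (by rwa [hOmegaDef])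
      rw [hOmegaDef] at h3
      exact hxp (mem_iInter.mp h3 p)
    · push_neg at hcase
      choose mfun hmfun using hcase
      set mfun' : ℕ → ℕ := fun j => if h : j < p then mfun j h else 0 with hmfun'
      set M : ℕ := N + 1 + p + (Finset.range p).sup mfun' with hM
      have hNM : N ≤ M := by omega
      have h1M : 1 ≤ M := by omega
      have hxK : x ∈ ⋃ j ∈ Finset.range M, F^[j] (C M) :=
        mem_sInter.mp hx _ (hKM M hNM h1M)
      simp only [mem_iUnion, Finset.mem_range] at hxK
      obtain ⟨j, hjM, hxj⟩ := hxK
      by_cases hjp : j < p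
      · have hle : mfun j hjp ≤ M := by
          have h2 : mfun' j = mfun j hjp := by simp [hmfun', hjp]
          have h3 : mfun' j ≤ (Finset.range p).sup mfun' :=
            Finset.le_sup (Finset.mem_range.mpr hjp)
          omega
        exact hmfun j hjp (relImage_iter_mono f j (hCantitone hle) hxj)
      · have hpj : p ≤ j := by omega
        have hCMU : C M ⊆ U := (hCantitone hNM).trans hCNU
        have h2 : x ∈ F^[j] U := relImage_iter_mono f j hCMU hxj
        have h3 : x ∈ B p := hBle p j hpj (hFnB j j le_rfl h2)
        exact hxp (subset_closure h3)
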